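/- Let R be a Noetherian F-finite normal domain of characteristic p > 0, Δ ≥ 0 an effective ℚ-divisor, 𝔞 ⊆ R a nonzero ideal, t ≥ 0, and 0 ≠ f ∈ R with corresponding principal Cartier divisor H = div(f). Then f·τ(R, Δ, 𝔞^t) = τ(R, Δ + H, 𝔞^t). -/
import Mathlib


/-!
Statement 2: for `0 ≠ f ∈ R` with principal Cartier divisor `H = div(f)`,
`f·τ(R, Δ, 𝔞^t) = τ(R, Δ + H, 𝔞^t)`.

The ℚ-divisor `Δ ≥ 0` enters only through the family
`C e = Hom_R(F^e_* R(⌈(p^e−1)Δ⌉), R)` of `p^{-e}`-linear maps; the corresponding family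
for `Δ + H` is `{φ(f^{p^e−1}·−) : φ ∈ C e}`, since
`Hom_R(F^e_* R(⌈(p^e−1)(Δ+H)⌉), R) = Hom_R(F^e_* R(⌈(p^e−1)Δ⌉), R) · f^{p^e−1}`.
-/

/-- `Hom_R(F^e_* R, R)`: the set of additive `p^{-e}`-linear maps `φ : R → R`. -/
def PeLin (R : Type) [CommRing R] (p e : ℕ) : Set (R →+ R) :=
  {φ | ∀ r x : R, φ (r ^ p ^ e * x) = r * φ x}

/-- `τ` is the big test ideal `τ(R, Δ, 𝔞^t)`: the smallest nonzero ideal `J` with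
`φ(F^e_*(𝔞^{⌈p^e t⌉} J)) ⊆ J` for all `e > 0`, `φ ∈ C e = Hom_R(F^e_* R(⌈(p^e−1)Δ⌉), R)`. -/
def IsBigTestIdeal {R : Type} [CommRing R] (p : ℕ) (C : ℕ → Set (R →+ R))
    (a : Ideal R) (t : ℝ) (τ : Ideal R) : Prop :=
  IsLeast {J : Ideal R | J ≠ ⊥ ∧ ∀ e : ℕ, 0 < e → ∀ φ ∈ C e,
    ∀ x ∈ a ^ ⌈(p : ℝ) ^ e * t⌉₊ * J, φ x ∈ J} τ

theorem bigTestIdeal_add_principal_divisor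
    {R : Type} [CommRing R] [IsDomain R] [IsNoetherianRing R] [IsIntegrallyClosed R]
    (p : ℕ) (hp : p.Prime) [CharP R p] [ExpChar R p]
    (hFfin : (frobenius R p).Finite)  -- R is F-finite
    (C : ℕ → Set (R →+ R)) (hC : ∀ e, C e ⊆ PeLin R p e)
       -- `C e = Hom_R(F^e_* R(⌈(p^e−1)Δ⌉), R)` for the effective ℚ-divisor Δ ≥ 0
    (a : Ideal R) (ha : a ≠ ⊥)
    (t : ℝ) (ht : 0 ≤ t)
    (f : R) (hf : f ≠ 0)
    (τ : Ideal R) (hτ : IsBigTestIdeal p C a t τ) :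
    -- `f·τ(R, Δ, 𝔞^t)` is the big test ideal of `(R, Δ + H, 𝔞^t)`, `H = div_R(f)`:
    IsBigTestIdeal p
      (fun e => {ψ : R →+ R | ∃ φ ∈ C e, ∀ x : R, ψ x = φ (f ^ (p ^ e - 1) * x)})
      a t (Ideal.span {f} * τ) := by

  obtain ⟨⟨hτ0, hτcl⟩, hτlb⟩ := hτ
  have hpow : (p ^ 1 : ℕ) ≤ p ^ 1 := le_refl _
  have hpe : ∀ e : ℕ, f ^ (p ^ e - 1) * f = f ^ p ^ e := by
    intro e
    rw [← pow_succ, Nat.sub_add_cancel (Nat.one_le_pow _ _ hp.pos)]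
  constructor
  · refine ⟨?_, ?_⟩
    · intro h
      rcases Ideal.mul_eq_bot.mp h with h | h
      · exact hf (by simpa [Ideal.span_singleton_eq_bot] using h)
      · exact hτ0 h
    · intro e he ψ hψ x hx
      obtain ⟨φ, hφ, hψφ⟩ := hψ
      rw [mul_left_comm] at hx
      obtain ⟨y, hy, rfl⟩ := Ideal.mem_span_singleton_mul.mp hx
      rw [hψφ, ← mul_assoc, hpe e, hC e hφ f y]
      exact Ideal.mem_span_singleton_mul.mpr ⟨φ y, hτcl e he φ hφ y hy, rfl⟩
  · rintro J ⟨hJ0, hJcl⟩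
    have hmem : ∀ x : R, x ∈ J.colon (Ideal.span {f}) ↔ f * x ∈ J := fun x =>
      by rw [mul_comm]; exact Ideal.mem_colon_span_singleton
    have hle : J ≤ J.colon (Ideal.span {f}) := fun x hx =>
      (hmem x).mpr (Ideal.mul_mem_left _ _ hx)
    have hτle : τ ≤ J.colon (Ideal.span {f}) := by
      apply hτlb
      refine ⟨fun h => hJ0 (le_bot_iff.mp (h ▸ hle)), ?_⟩
      intro e he φ hφ x hx
      have hfx : f * x ∈ a ^ ⌈(p : ℝ) ^ e * t⌉₊ * J := by
        refine Submodule.mul_induction_on hx (fun m hm y hy => ?_)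
          (fun u v hu hv => by rw [mul_add]; exact add_mem hu hv)
        rw [mul_left_comm]
        exact Ideal.mul_mem_mul hm ((hmem y).mp hy)
      have := hJcl e he (φ.comp (AddMonoidHom.mulLeft (f ^ (p ^ e - 1))))
        ⟨φ, hφ, fun x => rfl⟩ (f * x) hfx
      simp only [AddMonoidHom.coe_comp, Function.comp_apply,
        AddMonoidHom.coe_mulLeft] at this
      rw [← mul_assoc, hpe e, hC e hφ f x] at this
      exact (hmem _).mpr this
    intro x hx
    obtain ⟨y, hy, rfl⟩ := Ideal.mem_span_singleton_mul.mp hx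
    exact (hmem y).mp (hτle hy)
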